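/- Let Y be a finite type, π_ref a probability mass function on Y, r : Y → ℝ injective, and N ≥ 2. Define r_BOND(y) = log p_≤(y) + (1/(N−1)) · log Σ_{i=1}^{N} (p_<(y)/p_≤(y))^(i−1) for y with π_ref(y) > 0, and β_BOND = 1/(N−1). Then for every y with π_ref(y) > 0, π_BoN(y) = π_ref(y) · exp(r_BOND(y)/β_BOND); i.e., the Best-of-N distribution is exactly the exponential tilting of π_ref by reward r_BOND at regularization strength β_BOND. -/

import Mathlib

open scoped Classical

/-- `pLt pref r y` is the probability under `pref` that a sample has strictly smaller reward. -/
noncomputable def pLt {Y : Type*} [Fintype Y] (pref : Y → ℝ) (r : Y → ℝ) (y : Y) : ℝ :=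
  ∑ y' ∈ Finset.univ.filter (fun y' => r y' < r y), pref y'

/-- `pLe pref r y` is the probability under `pref` that a sample has reward not larger. -/
noncomputable def pLe {Y : Type*} [Fintype Y] (pref : Y → ℝ) (r : Y → ℝ) (y : Y) : ℝ :=
  ∑ y' ∈ Finset.univ.filter (fun y' => r y' ≤ r y), pref y'

/-- The Best-of-N selection of the tuple `t` is `y`: the smallest index `i` among the
argmax indices of `r ∘ t` satisfies `t i = y`. -/
def IsBoNSelection {Y : Type*} (r : Y → ℝ) {N : ℕ} (t : Fin N → Y) (y : Y) : Prop :=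
  ∃ i : Fin N, (∀ j, r (t j) ≤ r (t i)) ∧
    (∀ i' : Fin N, (∀ j, r (t j) ≤ r (t i')) → i ≤ i') ∧ t i = y

/-- The Best-of-N distribution: probability that sampling `N` i.i.d. points from `pref`
and selecting the best one yields `y`. -/
noncomputable def piBoN {Y : Type*} [Fintype Y] (pref : Y → ℝ) (r : Y → ℝ) (N : ℕ) (y : Y) : ℝ :=
  ∑ t : Fin N → Y, if IsBoNSelection r t y then ∏ j, pref (t j) else 0

/-- Auxiliary: power of a filtered sum as a sum over tuples. -/
lemma pow_filter_sum_eq {Y : Type*} [Fintype Y] (pref : Y → ℝ) (P : Y → Prop)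
    [DecidablePred P] (N : ℕ) :
    (∑ x ∈ Finset.univ.filter P, pref x) ^ N =
      ∑ t : Fin N → Y, if ∀ j, P (t j) then ∏ j, pref (t j) else 0 := by
  have h1 : ∀ t : Fin N → Y,
      (if ∀ j, P (t j) then ∏ j, pref (t j) else 0) =
        ∏ j, (if P (t j) then pref (t j) else 0) := by
    intro t
    by_cases h : ∀ j, P (t j)
    · simp [h]
    · push_neg at h
      obtain ⟨j, hj⟩ := h
      rw [if_neg, Finset.prod_eq_zero (Finset.mem_univ j)]
      · simp [hj]
      · push_neg; exact ⟨j, hj⟩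
  simp_rw [h1]
  have h2 : (∑ x ∈ Finset.univ.filter P, pref x) =
      ∑ x : Y, (if P x then pref x else 0) := (Finset.sum_filter _ _)
  rw [h2, ← Fin.prod_const N (∑ x : Y, if P x then pref x else 0)]
  rw [Finset.prod_univ_sum]
  rw [Fintype.piFinset_univ]

lemma isBoNSelection_iff {Y : Type*} (r : Y → ℝ) (hr : Function.Injective r)
    {N : ℕ} (t : Fin N → Y) (y : Y) :
    IsBoNSelection r t y ↔ (∀ j, r (t j) ≤ r y) ∧ ∃ i, t i = y := by
  constructor
  · rintro ⟨i, hmax, _, hiy⟩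
    exact ⟨by simpa [hiy] using hmax, i, hiy⟩
  · rintro ⟨hle, i₀, hi₀⟩
    have hne : (Finset.univ.filter (fun i => t i = y)).Nonempty :=
      ⟨i₀, by simp [hi₀]⟩
    set i := (Finset.univ.filter (fun i => t i = y)).min' hne with hi
    have hiy : t i = y := by
      have := Finset.min'_mem _ hne
      simpa using this
    refine ⟨i, by simpa [hiy] using hle, ?_, hiy⟩
    intro i' hi'
    have h1 : r (t i') ≤ r y := hle i'
    have h2 : r y ≤ r (t i') := by simpa [hiy] using hi' i
    have : t i' = y := hr (le_antisymm h1 h2)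
    exact Finset.min'_le _ _ (by simp [this])

theorem bon_is_exponential_tilting {Y : Type*} [Fintype Y]
    (pref : Y → ℝ) (hnonneg : ∀ y, 0 ≤ pref y) (hsum : ∑ y, pref y = 1)
    (r : Y → ℝ) (hr : Function.Injective r)
    (N : ℕ) (hN : 2 ≤ N)
    (rBOND : Y → ℝ)
    (hrBOND : ∀ y, 0 < pref y →
      rBOND y = Real.log (pLe pref r y) +
        (1 / ((N : ℝ) - 1)) *
          Real.log (∑ i ∈ Finset.range N, (pLt pref r y / pLe pref r y) ^ i))
    (βBOND : ℝ) (hβ : βBOND = 1 / ((N : ℝ) - 1)) :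
    ∀ y : Y, 0 < pref y →
      piBoN pref r N y = pref y * Real.exp (rBOND y / βBOND) := by
  intro y hy
  set a := pLt pref r y with ha
  set b := pLe pref r y with hb
  -- basic facts
  have hfilter : Finset.univ.filter (fun y' => r y' ≤ r y) =
      insert y (Finset.univ.filter (fun y' => r y' < r y)) := by
    ext z
    simp only [Finset.mem_insert, Finset.mem_filter, Finset.mem_univ, true_and]
    constructor
    · intro h
      rcases eq_or_lt_of_le h with h' | h'
      · exact Or.inl (hr h')
      · exact Or.inr h'
    · rintro (rfl | h)
      · exact le_rfl
      · exact h.le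
  have hba : b = a + pref y := by
    rw [hb, ha, pLe, pLt, hfilter, Finset.sum_insert (by simp)]
    ring
  have ha0 : 0 ≤ a := Finset.sum_nonneg fun z _ => hnonneg z
  have hb0 : 0 < b := by rw [hba]; positivity
  -- step 1: piBoN = b^N - a^N
  have hLtsub : ∀ t : Fin N → Y,
      (∀ j, r (t j) < r y) ↔ (∀ j, r (t j) ≤ r y) ∧ ¬∃ i, t i = y := by
    intro t
    constructor
    · intro h
      refine ⟨fun j => (h j).le, ?_⟩
      rintro ⟨i, hi⟩
      exact absurd (hi ▸ h i) (lt_irrefl _)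
    · rintro ⟨hle, hne⟩ j
      push_neg at hne
      exact lt_of_le_of_ne (hle j) (fun h => hne j (hr h))
  have hpi : piBoN pref r N y = b ^ N - a ^ N := by
    rw [hb, ha, pLe, pLt, pow_filter_sum_eq, pow_filter_sum_eq, piBoN, ← Finset.sum_sub_distrib]
    refine Finset.sum_congr rfl fun t _ => ?_
    rw [isBoNSelection_iff r hr]
    by_cases hA : ∀ j, r (t j) ≤ r y
    · by_cases hE : ∃ i, t i = y
      · rw [if_pos ⟨hA, hE⟩, if_pos hA, if_neg]
        · ring
        · rw [hLtsub]; tauto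
      · rw [if_neg (by tauto), if_pos hA, if_pos (by rw [hLtsub]; exact ⟨hA, hE⟩)]; ring
    · rw [if_neg (by tauto), if_neg hA, if_neg (by rw [hLtsub]; tauto)]; ring
  -- step 2: compute the RHS
  have hS0 : 0 < ∑ i ∈ Finset.range N, (a / b) ^ i := by
    apply Finset.sum_pos' (fun i _ => by positivity)
    exact ⟨0, Finset.mem_range.2 (by omega), by simp⟩
  have hN1 : ((N : ℝ) - 1) ≠ 0 := by
    have : (2 : ℝ) ≤ (N : ℝ) := by exact_mod_cast hN
    linarith
  have hNcast : ((N : ℝ) - 1) = ((N - 1 : ℕ) : ℝ) := by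
    have : (1 : ℕ) ≤ N := by omega
    push_cast [this]; ring
  have hdiv : rBOND y / βBOND = ((N - 1 : ℕ) : ℝ) * Real.log b +
      Real.log (∑ i ∈ Finset.range N, (a / b) ^ i) := by
    rw [hrBOND y hy, hβ, div_div_eq_mul_div, div_one, ← ha, ← hb, ← hNcast]
    field_simp
  have hexp : Real.exp (rBOND y / βBOND) =
      b ^ (N - 1) * ∑ i ∈ Finset.range N, (a / b) ^ i := by
    rw [hdiv, Real.exp_add, Real.exp_nat_mul, Real.exp_log hb0, Real.exp_log hS0]
  rw [hpi, hexp]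
  -- step 3: algebra
  have hkey : b ^ (N - 1) * ∑ i ∈ Finset.range N, (a / b) ^ i =
      ∑ i ∈ Finset.range N, a ^ i * b ^ (N - 1 - i) := by
    rw [Finset.mul_sum]
    refine Finset.sum_congr rfl fun i hi => ?_
    have hiN : i ≤ N - 1 := by
      have := Finset.mem_range.1 hi; omega
    rw [div_pow, show N - 1 = i + (N - 1 - i) by omega, pow_add]
    field_simp
    rw [Nat.add_sub_cancel_left]
    ring
  rw [hkey]
  have := geom_sum₂_mul a b N
  rw [hba] at this ⊢
  nlinarith [this]
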